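/- The canonical bristled module C is the sum of its bristle submodules; more precisely, C is the sum of the binomial(n+1, 2) bristle submodules generated by the elements d(c_i) = c_{ii} (for 1 ≤ i ≤ n) and d(c_i + c_j) = c_{ii} + c_{ij} + c_{jj} (for 1 ≤ i < j ≤ n): these elements span C₁, and their images under the maps α₁, …, α_n span C₂. -/

import Mathlib

/-!
The canonical bristled `n`-Kronecker module `C = (C₁, C₂; α₁, …, α_n)`:
`C₂ = Fin n → k` with standard basis `c_i`, and `C₁ = Sym2 (Fin n) → k` with
standard basis `c_{ij}` indexed by unordered pairs `{i,j}`.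
`α_r` is given by `(α_r x) i = x {i, r}`.
For `c = Σ λ_i c_i ∈ C₂`, `d(c) = Σ_{i≤j} λ_i λ_j c_{ij}`; in particular
`d(c_i) = c_{ii}` and `d(c_i + c_j) = c_{ii} + c_{ij} + c_{jj}` for `i ≠ j`.
-/

/-- The structure map `α_r : C₁ → C₂` of the canonical bristled module. -/
def canAlpha (k : Type*) [Field k] (n : ℕ) (r : Fin n) :
    (Sym2 (Fin n) → k) →ₗ[k] (Fin n → k) where
  toFun x i := x (s(i, r))
  map_add' _ _ := rfl
  map_smul' _ _ := rfl

/-- `d(c) = Σ_{i ≤ j} λ_i λ_j c_{ij}` for `c = Σ_i λ_i c_i`. -/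
def dvec {k : Type*} [Field k] {n : ℕ} (c : Fin n → k) : Sym2 (Fin n) → k :=
  Sym2.lift ⟨fun i j => c i * c j, fun i j => mul_comm (c i) (c j)⟩

/-- A bristle submodule of the canonical bristled module: a pair of
one-dimensional subspaces `(U₁ ⊆ C₁, U₂ ⊆ C₂)` with `α_r(U₁) ⊆ U₂` for all `r`
and `α_r(U₁) ≠ 0` for at least one `r`. -/
def IsBristleSub {k : Type*} [Field k] {n : ℕ}
    (U₁ : Submodule k (Sym2 (Fin n) → k)) (U₂ : Submodule k (Fin n → k)) : Prop :=
  (∀ r, U₁.map (canAlpha k n r) ≤ U₂) ∧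
    Module.finrank k U₁ = 1 ∧ Module.finrank k U₂ = 1 ∧
    ∃ r, U₁.map (canAlpha k n r) ≠ ⊥

/-- The set of the `binomial(n+1,2)` distinguished generators
`d(c_i) = c_{ii}` (for `i`) and `d(c_i + c_j) = c_{ii} + c_{ij} + c_{jj}`
(for `i < j`). -/
def genSet (k : Type*) [Field k] (n : ℕ) : Set (Sym2 (Fin n) → k) :=
  {x | ∃ i : Fin n, x = dvec (Pi.single i 1)} ∪
  {x | ∃ i j : Fin n, i < j ∧ x = dvec (Pi.single i 1 + Pi.single j 1)}


-- auxiliary lemmas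

lemma dvec_mk {k : Type*} [Field k] {n : ℕ} (c : Fin n → k) (a b : Fin n) :
    dvec c (s(a, b)) = c a * c b := rfl

lemma canAlpha_dvec {k : Type*} [Field k] {n : ℕ} (r : Fin n) (c : Fin n → k) :
    canAlpha k n r (dvec c) = c r • c := by
  funext a
  simp only [canAlpha, LinearMap.coe_mk, AddHom.coe_mk, dvec_mk, Pi.smul_apply, smul_eq_mul]
  ring

lemma dvec_ne_zero {k : Type*} [Field k] {n : ℕ} {c : Fin n → k} (hc : c ≠ 0) :
    dvec c ≠ 0 := by
  obtain ⟨r, hr⟩ := Function.ne_iff.mp hc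
  intro h
  have : dvec c (s(r, r)) = 0 := by rw [h]; rfl
  rw [dvec_mk] at this
  exact hr (by simpa using mul_self_eq_zero.mp this)

lemma bristle_of_dvec {k : Type*} [Field k] {n : ℕ} {c : Fin n → k} (hc : c ≠ 0) :
    IsBristleSub (Submodule.span k {dvec c}) (Submodule.span k {c}) := by
  have hmap : ∀ r, (Submodule.span k {dvec c}).map (canAlpha k n r)
      = Submodule.span k {(c r) • c} := by
    intro r
    rw [Submodule.map_span, Set.image_singleton, canAlpha_dvec]
  refine ⟨fun r => ?_, ?_, ?_, ?_⟩
  · rw [hmap]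
    exact Submodule.span_le.mpr (by
      simp only [Set.singleton_subset_iff, SetLike.mem_coe]
      exact Submodule.smul_mem _ _ (Submodule.mem_span_singleton_self c))
  · exact finrank_span_singleton (dvec_ne_zero hc)
  · exact finrank_span_singleton hc
  · obtain ⟨r, hr⟩ := Function.ne_iff.mp hc
    refine ⟨r, ?_⟩
    rw [hmap, Ne, Submodule.span_singleton_eq_bot]
    exact smul_ne_zero (by simpa using hr) hc

lemma single_ne_zero' {k : Type*} [Field k] {n : ℕ} (i : Fin n) :
    (Pi.single i 1 : Fin n → k) ≠ 0 := by
  intro h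
  have := congrFun h i
  simp at this

lemma single_add_single_ne_zero {k : Type*} [Field k] {n : ℕ} {i j : Fin n} (hij : i ≠ j) :
    (Pi.single i 1 + Pi.single j 1 : Fin n → k) ≠ 0 := by
  intro h
  have := congrFun h i
  simp [Pi.single_apply, hij] at this

lemma dvec_single {k : Type*} [Field k] {n : ℕ} (i : Fin n) :
    dvec (Pi.single i (1:k)) = Pi.single (s(i, i)) 1 := by
  funext p
  refine Sym2.ind (fun a b => ?_) p
  rw [dvec_mk]
  simp only [Pi.single_apply, Sym2.mk_eq_mk_iff]
  by_cases ha : a = i <;> by_cases hb : b = i <;>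
    simp_all [Prod.ext_iff, Prod.swap, eq_comm]

lemma dvec_single_add {k : Type*} [Field k] {n : ℕ} {i j : Fin n} (hij : i ≠ j) :
    dvec (Pi.single i (1:k) + Pi.single j 1) =
      (Pi.single (s(i, i)) 1 + Pi.single (s(i, j)) 1
        + Pi.single (s(j, j)) 1 : Sym2 (Fin n) → k) := by
  funext p
  refine Sym2.ind (fun a b => ?_) p
  simp only [dvec_mk, Pi.add_apply, Pi.single_apply, Sym2.mk_eq_mk_iff]
  by_cases hai : a = i <;> by_cases hbi : b = i <;>
    by_cases haj : a = j <;> by_cases hbj : b = j <;>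
    simp_all [Prod.ext_iff, Prod.swap, eq_comm]

/-- `C` is the sum of its bristle submodules; more precisely, `C` is
the sum of the bristle submodules generated by the elements `d(c_i)` and
`d(c_i + c_j)`: these elements span `C₁`, and their images under `α₁, …, α_n`
span `C₂`. -/
theorem canonical_module_is_sum_of_bristle_submodules
    {k : Type*} [Field k] {n : ℕ} (hn : 1 ≤ n) :
    sSup {U₁ : Submodule k (Sym2 (Fin n) → k) | ∃ U₂, IsBristleSub U₁ U₂} = ⊤ ∧
    sSup {U₂ : Submodule k (Fin n → k) | ∃ U₁, IsBristleSub U₁ U₂} = ⊤ ∧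
    (∀ x ∈ genSet k n, ∃ (c : Fin n → k), c ≠ 0 ∧ x = dvec c ∧
      IsBristleSub (Submodule.span k {x}) (Submodule.span k {c})) ∧
    Submodule.span k (genSet k n) = ⊤ ∧
    Submodule.span k (⋃ r : Fin n, canAlpha k n r '' genSet k n) = ⊤ := by
  -- Part 3
  have part3 : ∀ x ∈ genSet k n, ∃ (c : Fin n → k), c ≠ 0 ∧ x = dvec c ∧
      IsBristleSub (Submodule.span k {x}) (Submodule.span k {c}) := by
    rintro x (⟨i, rfl⟩ | ⟨i, j, hij, rfl⟩)
    · exact ⟨Pi.single i 1, single_ne_zero' i, rfl, bristle_of_dvec (single_ne_zero' i)⟩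
    · exact ⟨Pi.single i 1 + Pi.single j 1, single_add_single_ne_zero hij.ne, rfl,
        bristle_of_dvec (single_add_single_ne_zero hij.ne)⟩
  -- Part 4 : genSet spans C₁
  have part4 : Submodule.span k (genSet k n) = ⊤ := by
    rw [eq_top_iff, ← (Pi.basisFun k (Sym2 (Fin n))).span_eq, Submodule.span_le]
    rintro _ ⟨p, rfl⟩
    rw [Pi.basisFun_apply]
    have hmem : ∀ i : Fin n, dvec (Pi.single i (1:k)) ∈ Submodule.span k (genSet k n) :=
      fun i => Submodule.subset_span (Or.inl ⟨i, rfl⟩)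
    refine Sym2.ind (fun a b => ?_) p
    rcases lt_trichotomy a b with h | rfl | h
    · have hmem2 : dvec (Pi.single a (1:k) + Pi.single b 1)
          ∈ Submodule.span k (genSet k n) :=
        Submodule.subset_span (Or.inr ⟨a, b, h, rfl⟩)
      rw [dvec_single_add h.ne] at hmem2
      have ha' := hmem a
      rw [dvec_single a] at ha'
      have hb' := hmem b
      rw [dvec_single b] at hb'
      have := Submodule.sub_mem _ (Submodule.sub_mem _ hmem2 ha') hb' 
      convert this using 2
      abel
      exact SetLike.mem_coe
    · have := hmem a
      rw [dvec_single a] at this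
      exact this
    · have hmem2 : dvec (Pi.single b (1:k) + Pi.single a 1)
          ∈ Submodule.span k (genSet k n) :=
        Submodule.subset_span (Or.inr ⟨b, a, h, rfl⟩)
      rw [dvec_single_add h.ne] at hmem2
      have ha' := hmem a
      rw [dvec_single a] at ha'
      have hb' := hmem b
      rw [dvec_single b] at hb'
      have := Submodule.sub_mem _ (Submodule.sub_mem _ hmem2 hb') ha' 
      have heq : s(b, a) = s(a, b) := Sym2.eq_swap
      rw [heq] at this
      convert this using 2
      abel
      exact SetLike.mem_coe
  -- Part 5 : images span C₂
  have part5 : Submodule.span k (⋃ r : Fin n, canAlpha k n r '' genSet k n) = ⊤ := by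
    rw [eq_top_iff, ← (Pi.basisFun k (Fin n)).span_eq, Submodule.span_le]
    rintro _ ⟨i, rfl⟩
    rw [Pi.basisFun_apply]
    apply Submodule.subset_span
    simp only [Set.mem_iUnion, Set.mem_image]
    refine ⟨i, dvec (Pi.single i 1), Or.inl ⟨i, rfl⟩, ?_⟩
    rw [canAlpha_dvec]
    simp
  refine ⟨?_, ?_, part3, part4, part5⟩
  · rw [eq_top_iff, ← part4, Submodule.span_le]
    intro x hx
    obtain ⟨c, hc, hxc, hb⟩ := part3 x hx
    have hS : Submodule.span k {x} ∈
        {U₁ : Submodule k (Sym2 (Fin n) → k) | ∃ U₂, IsBristleSub U₁ U₂} :=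
      ⟨Submodule.span k {c}, hb⟩
    exact le_sSup hS (Submodule.mem_span_singleton_self x)
  · rw [eq_top_iff, ← part5, Submodule.span_le]
    rintro _ ⟨_, ⟨r, rfl⟩, x, hx, rfl⟩
    obtain ⟨c, hc, hxc, hb⟩ := part3 x hx
    have : canAlpha k n r x ∈ Submodule.span k {c} :=
      hb.1 r ⟨x, Submodule.mem_span_singleton_self x, rfl⟩
    have hS : Submodule.span k {c} ∈
        {U₂ : Submodule k (Fin n → k) | ∃ U₁, IsBristleSub U₁ U₂} :=
      ⟨Submodule.span k {x}, hb⟩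
    exact le_sSup hS this
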